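/- Let m be any positive integer, let l(m) = ⌈log₂ m⌉ + 1, w(m) = 𝟙[m > 1]·⌈3m/2⌉, and let r be the sequence with r(1) = 0, r(k) = 3k/2 + r(k/2) for k even, and r(k) = 2 + 3(k−1)/2 + r((k+1)/2) for odd k ≠ 1. Then for any m scalar-valued affine functions f₁, …, f_m : ℝⁿ → ℝ there exists an l(m)-layer ReLU network g : ℝⁿ → ℝ with r(m) hidden neurons and a maximum width of w(m) such that g(x) = max_{i∈[m]} f_i(x) for all x ∈ ℝⁿ, and likewise there exists such a network with g(x) = min_{i∈[m]} f_i(x) for all x ∈ ℝⁿ. -/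

import Mathlib

noncomputable section

/-- The ReLU activation function. -/
def relu (x : ℝ) : ℝ := max 0 x

/-- A ReLU network with `hidden` hidden layers (i.e. `hidden + 1` layers in total),
layer dimensions `k 0, k 1, …, k (hidden + 1)`, weight matrices `W i` and biases `b i`. -/
structure ReLUNet where
  hidden : ℕ
  k : ℕ → ℕ
  W : (i : ℕ) → Matrix (Fin (k (i + 1))) (Fin (k i)) ℝ
  b : (i : ℕ) → Fin (k (i + 1)) → ℝ

namespace ReLUNet

/-- The output of the `(i+1)`-st affine layer: `h 1 (x) = W 1 x + b 1` and
`h (i+1) (x) = W (i+1) σ (h i (x)) + b (i+1)`. -/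
def layerOut (N : ReLUNet) : (i : ℕ) → (Fin (N.k 0) → ℝ) → Fin (N.k (i + 1)) → ℝ
  | 0, x => (N.W 0).mulVec x + N.b 0
  | i + 1, x => (N.W (i + 1)).mulVec (fun j => relu (N.layerOut i x j)) + N.b (i + 1)

/-- The input-output function of the network. -/
def eval (N : ReLUNet) : (Fin (N.k 0) → ℝ) → Fin (N.k (N.hidden + 1)) → ℝ :=
  N.layerOut N.hidden

/-- The number of layers of the network. -/
def depth (N : ReLUNet) : ℕ := N.hidden + 1

/-- The number of hidden neurons of the network. -/
def numHiddenNeurons (N : ReLUNet) : ℕ := ∑ i ∈ Finset.Icc 1 N.hidden, N.k i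

/-- The maximum width (maximum number of neurons over all hidden layers; `0` if none). -/
def maxWidth (N : ReLUNet) : ℕ := (Finset.Icc 1 N.hidden).sup N.k

/-- The network `N` exactly represents the function `f : ℝⁿ → ℝᵐ`. -/
def Computes (N : ReLUNet) {n m : ℕ} (f : (Fin n → ℝ) → Fin m → ℝ) : Prop :=
  ∃ (h0 : N.k 0 = n) (h1 : N.k (N.hidden + 1) = m),
    ∀ (x : Fin n → ℝ) (j : Fin (N.k (N.hidden + 1))),
      N.eval (fun i => x (Fin.cast h0 i)) j = f x (Fin.cast h1 j)

/-- The network `N` exactly represents the scalar-valued function `f : ℝⁿ → ℝ`. -/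
def ComputesScalar (N : ReLUNet) {n : ℕ} (f : (Fin n → ℝ) → ℝ) : Prop :=
  N.Computes fun x (_ : Fin 1) => f x

end ReLUNet

/-- `f : ℝⁿ → ℝ` is an affine function. -/
def IsAffineFn {n : ℕ} (f : (Fin n → ℝ) → ℝ) : Prop :=
  ∃ (a : Fin n → ℝ) (c : ℝ), ∀ x, f x = (∑ i, a i * x i) + c

/-- `p` agrees with some affine function on the set `X`. -/
def AffineOnSet {n : ℕ} (p : (Fin n → ℝ) → ℝ) (X : Set (Fin n → ℝ)) : Prop :=
  ∃ f, IsAffineFn f ∧ ∀ x ∈ X, p x = f x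

/-- `X` is a finite family of closed subsets of `ℝⁿ` covering `ℝⁿ` on each of which `p` is
affine (the CPWL definition). -/
def IsCPWLFamily {n I : ℕ} (p : (Fin n → ℝ) → ℝ) (X : Fin I → Set (Fin n → ℝ)) : Prop :=
  (∀ i, IsClosed (X i)) ∧ (⋃ i, X i) = Set.univ ∧ ∀ i, AffineOnSet p (X i)

/-- A family of pieces: closed convex subsets satisfying the CPWL definition. -/
def IsPieceFamily {n I : ℕ} (p : (Fin n → ℝ) → ℝ) (X : Fin I → Set (Fin n → ℝ)) : Prop :=
  IsCPWLFamily p X ∧ ∀ i, Convex ℝ (X i)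

/-- `p` is CPWL with (minimum) number of pieces `q`. -/
def HasPieces {n : ℕ} (p : (Fin n → ℝ) → ℝ) (q : ℕ) : Prop :=
  (∃ X : Fin q → Set (Fin n → ℝ), IsPieceFamily p X) ∧
  ∀ (q' : ℕ) (X : Fin q' → Set (Fin n → ℝ)), IsPieceFamily p X → q ≤ q'

/-- A family of closed subsets satisfying the CPWL definition with minimum cardinality. -/
def IsMinimalClosedFamily {n I : ℕ} (p : (Fin n → ℝ) → ℝ)
    (X : Fin I → Set (Fin n → ℝ)) : Prop :=
  IsCPWLFamily p X ∧
  ∀ (I' : ℕ) (Y : Fin I' → Set (Fin n → ℝ)), IsCPWLFamily p Y → I ≤ I'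

/-- `f` is a linear component of `p`: `f` is affine and agrees with `p` on the union of a
nonempty subfamily of a minimal family of closed subsets satisfying the CPWL definition. -/
def IsLinearComponent {n : ℕ} (p f : (Fin n → ℝ) → ℝ) : Prop :=
  IsAffineFn f ∧
  ∃ (I : ℕ) (X : Fin I → Set (Fin n → ℝ)), IsMinimalClosedFamily p X ∧
    ∃ M : Finset (Fin I), M.Nonempty ∧ ∀ i ∈ M, ∀ x ∈ X i, f x = p x

/-- `p` has exactly `k` distinct linear components. -/
def HasLinearComponents {n : ℕ} (p : (Fin n → ℝ) → ℝ) (k : ℕ) : Prop :=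
  {f | IsLinearComponent p f}.Finite ∧ {f | IsLinearComponent p f}.ncard = k

/-- `φ(n, k) = min (∑_{i=0}^n C((k² − k)/2, i), k!)`. -/
def phi (n k : ℕ) : ℕ :=
  min (∑ i ∈ Finset.range (n + 1), Nat.choose ((k ^ 2 - k) / 2) i) (Nat.factorial k)

/-- A family of closed connected subsets of `ℝⁿ` covering `ℝⁿ` on each of which `p` is affine. -/
def IsConnFamily {n I : ℕ} (p : (Fin n → ℝ) → ℝ) (X : Fin I → Set (Fin n → ℝ)) : Prop :=
  (∀ i, IsClosed (X i)) ∧ (∀ i, IsConnected (X i)) ∧ (⋃ i, X i) = Set.univ ∧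
    ∀ i, AffineOnSet p (X i)

/-- A family of closed connected subsets satisfying the CPWL definition whose cardinality is
minimal among all such families (Assumption 1). -/
def IsMinConnFamily {n I : ℕ} (p : (Fin n → ℝ) → ℝ) (X : Fin I → Set (Fin n → ℝ)) : Prop :=
  IsConnFamily p X ∧
  ∀ (I' : ℕ) (Y : Fin I' → Set (Fin n → ℝ)), IsConnFamily p Y → I ≤ I'

/-- The sequence `r` from the paper: `r 1 = 0`, `r k = 3k/2 + r (k/2)` for even `k`, and
`r k = 2 + 3(k−1)/2 + r ((k+1)/2)` for odd `k ≠ 1`. -/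
def rseq : ℕ → ℕ
  | 0 => 0
  | 1 => 0
  | k + 2 =>
    if (k + 2) % 2 = 0 then 3 * ((k + 2) / 2) + rseq ((k + 2) / 2)
    else 2 + 3 * ((k + 1) / 2) + rseq ((k + 3) / 2)
  decreasing_by all_goals omega

end
section Helpers

lemma relu_sub_relu (b : ℝ) : relu b - relu (-b) = b := by
  rcases le_total 0 b with h | h
  · simp [relu, max_eq_right h, max_eq_left (neg_nonpos.mpr h)]
  · simp [relu, max_eq_left h, max_eq_right (neg_nonneg.mpr h)]

lemma relu_max (a b : ℝ) : relu (a - b) + relu b - relu (-b) = max a b := by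
  have h := relu_sub_relu b
  have : relu (a - b) + b = max a b := by
    rcases le_total a b with h2 | h2
    · simp [relu, max_eq_left, sub_nonpos.mpr h2, max_eq_right h2]
    · simp [relu, max_eq_right (sub_nonneg.mpr h2), max_eq_left h2]
  linarith

lemma affine_proj {w : ℕ} (t : Fin w) : IsAffineFn (fun y : Fin w → ℝ => y t) := by
  refine ⟨Pi.single t 1, 0, fun y => ?_⟩
  simp [Pi.single_apply, ite_mul]

lemma IsAffineFn.add' {n : ℕ} {f g : (Fin n → ℝ) → ℝ} (hf : IsAffineFn f) (hg : IsAffineFn g) :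
    IsAffineFn (fun x => f x + g x) := by
  obtain ⟨a, c, ha⟩ := hf; obtain ⟨a', c', ha'⟩ := hg
  exact ⟨a + a', c + c', fun x => by simp [ha, ha', add_mul, Finset.sum_add_distrib]; ring⟩

lemma IsAffineFn.neg' {n : ℕ} {f : (Fin n → ℝ) → ℝ} (hf : IsAffineFn f) :
    IsAffineFn (fun x => -f x) := by
  obtain ⟨a, c, ha⟩ := hf
  refine ⟨-a, -c, fun x => by simp [ha]; rw [← Finset.sum_neg_distrib]; ring_nf⟩

lemma IsAffineFn.sub' {n : ℕ} {f g : (Fin n → ℝ) → ℝ} (hf : IsAffineFn f) (hg : IsAffineFn g) :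
    IsAffineFn (fun x => f x - g x) := by
  simpa [sub_eq_add_neg] using hf.add' hg.neg'

end Helpers
lemma neg_net {n : ℕ} (N : ReLUNet) (g : (Fin n → ℝ) → ℝ) (h : N.ComputesScalar g) :
    ∃ N' : ReLUNet, N'.hidden = N.hidden ∧ N'.k = N.k ∧
      N'.ComputesScalar (fun x => -(g x)) := by
  classical
  refine ⟨⟨N.hidden, N.k,
    fun i => if hi : i = N.hidden then -(N.W i) else N.W i,
    fun i => if hi : i = N.hidden then -(N.b i) else N.b i⟩, rfl, rfl, ?_⟩
  set N' : ReLUNet := ⟨N.hidden, N.k,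
    fun i => if hi : i = N.hidden then -(N.W i) else N.W i,
    fun i => if hi : i = N.hidden then -(N.b i) else N.b i⟩
  have hsame : ∀ i, i < N.hidden → ∀ x, N'.layerOut i x = N.layerOut i x := by
    intro i
    induction i with
    | zero => intro hi x
              simp only [ReLUNet.layerOut, N']
              rw [dif_neg (by omega), dif_neg (by omega)]
    | succ i ih =>
        intro hi x
        simp only [ReLUNet.layerOut, N']
        rw [dif_neg (by omega), dif_neg (by omega), ih (by omega)]
  have hfin : ∀ x, N'.layerOut N.hidden x = -(N.layerOut N.hidden x) := by
    intro x
    cases hh : N.hidden with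
    | zero =>
        simp only [ReLUNet.layerOut, N']
        rw [dif_pos hh.symm, dif_pos hh.symm, Matrix.neg_mulVec]
        abel
    | succ i =>
        simp only [ReLUNet.layerOut, N']
        rw [dif_pos hh.symm, dif_pos hh.symm, Matrix.neg_mulVec, hsame i (by omega)]
        abel
  obtain ⟨h0, h1, hc⟩ := h
  exact ⟨h0, h1, fun x j => by
    have := hc x j
    simp only [ReLUNet.eval, N'] at *
    rw [hfin]
    simp only [Pi.neg_apply]
    rw [this]⟩
lemma neg_sup'_neg {ι : Type*} (s : Finset ι) (H : s.Nonempty) (f : ι → ℝ) :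
    -(s.sup' H fun i => -f i) = s.inf' H f := by
  apply le_antisymm
  · exact Finset.le_inf' _ _ fun i hi => neg_le.mpr (Finset.le_sup' (fun i => -f i) hi)
  · exact le_neg.mpr (Finset.sup'_le _ _ fun i hi => neg_le_neg (Finset.inf'_le _ hi))

/-- Pre-activation functions of the first hidden layer. -/
def Pfun {n m : ℕ} (h1 : 1 < m) (f : Fin m → (Fin n → ℝ) → ℝ) (t : ℕ) : (Fin n → ℝ) → ℝ :=
  if ht : t < 3 * (m / 2) then
    if t % 3 = 0 then fun x => f ⟨2 * (t / 3), by omega⟩ x - f ⟨2 * (t / 3) + 1, by omega⟩ x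
    else if t % 3 = 1 then f ⟨2 * (t / 3) + 1, by omega⟩
    else fun x => -f ⟨2 * (t / 3) + 1, by omega⟩ x
  else if t = 3 * (m / 2) then f ⟨m - 1, by omega⟩
  else fun x => -f ⟨m - 1, by omega⟩ x

/-- Affine functions combining the first hidden layer into pairwise maxima. -/
def gfun (m : ℕ) (j : Fin ((m + 1) / 2)) : (Fin ((3 * m + 1) / 2) → ℝ) → ℝ :=
  if hj : (j : ℕ) < m / 2 then
    fun y => y ⟨3 * j, by have := j.isLt; omega⟩ + y ⟨3 * j + 1, by have := j.isLt; omega⟩ -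
      y ⟨3 * j + 2, by have := j.isLt; omega⟩
  else
    fun y => y ⟨3 * j, by have := j.isLt; omega⟩ - y ⟨3 * j + 1, by have := j.isLt; omega⟩

lemma Pfun_affine {n m : ℕ} (h1 : 1 < m) (f : Fin m → (Fin n → ℝ) → ℝ)
    (hf : ∀ i, IsAffineFn (f i)) (t : ℕ) : IsAffineFn (Pfun h1 f t) := by
  unfold Pfun
  split_ifs
  exacts [(hf _).sub' (hf _), hf _, (hf _).neg', hf _, (hf _).neg']

lemma gfun_affine (m : ℕ) (j : Fin ((m + 1) / 2)) : IsAffineFn (gfun m j) := by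
  unfold gfun
  split_ifs
  · exact ((affine_proj _).add' (affine_proj _)).sub' (affine_proj _)
  · exact (affine_proj _).sub' (affine_proj _)
lemma Pfun_eval_0 {n m : ℕ} (h1 : 1 < m) (f : Fin m → (Fin n → ℝ) → ℝ) (j : ℕ)
    (hj : j < m / 2) (hm : 2 * j + 1 < m) (x : Fin n → ℝ) :
    Pfun h1 f (3 * j) x = f ⟨2 * j, by omega⟩ x - f ⟨2 * j + 1, hm⟩ x := by
  unfold Pfun
  rw [dif_pos (by omega), if_pos (by omega)]
  simp only [show 3 * j / 3 = j from by omega]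

lemma Pfun_eval_1 {n m : ℕ} (h1 : 1 < m) (f : Fin m → (Fin n → ℝ) → ℝ) (j : ℕ)
    (hj : j < m / 2) (hm : 2 * j + 1 < m) (x : Fin n → ℝ) :
    Pfun h1 f (3 * j + 1) x = f ⟨2 * j + 1, hm⟩ x := by
  unfold Pfun
  rw [dif_pos (by omega), if_neg (by omega), if_pos (by omega)]
  simp only [show (3 * j + 1) / 3 = j from by omega]

lemma Pfun_eval_2 {n m : ℕ} (h1 : 1 < m) (f : Fin m → (Fin n → ℝ) → ℝ) (j : ℕ)
    (hj : j < m / 2) (hm : 2 * j + 1 < m) (x : Fin n → ℝ) :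
    Pfun h1 f (3 * j + 2) x = -f ⟨2 * j + 1, hm⟩ x := by
  unfold Pfun
  rw [dif_pos (by omega), if_neg (by omega), if_neg (by omega)]
  simp only [show (3 * j + 2) / 3 = j from by omega]

lemma Pfun_eval_last0 {n m : ℕ} (h1 : 1 < m) (f : Fin m → (Fin n → ℝ) → ℝ) (x : Fin n → ℝ) :
    Pfun h1 f (3 * (m / 2)) x = f ⟨m - 1, by omega⟩ x := by
  unfold Pfun
  rw [dif_neg (by omega), if_pos rfl]

lemma Pfun_eval_last1 {n m : ℕ} (h1 : 1 < m) (f : Fin m → (Fin n → ℝ) → ℝ) (x : Fin n → ℝ) :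
    Pfun h1 f (3 * (m / 2) + 1) x = -f ⟨m - 1, by omega⟩ x := by
  unfold Pfun
  rw [dif_neg (by omega), if_neg (by omega)]

lemma gfun_relu_Pfun {n m : ℕ} (h1 : 1 < m) (f : Fin m → (Fin n → ℝ) → ℝ) (x : Fin n → ℝ)
    (j : Fin ((m + 1) / 2)) :
    gfun m j (fun t => relu (Pfun h1 f (t : ℕ) x)) =
      if hj : (j : ℕ) < m / 2 then
        max (f ⟨2 * j, by omega⟩ x) (f ⟨2 * j + 1, by omega⟩ x)
      else f ⟨m - 1, by omega⟩ x := by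
  by_cases hj : (j : ℕ) < m / 2
  · rw [dif_pos hj]
    unfold gfun
    rw [dif_pos hj]
    simp only
    rw [Pfun_eval_0 h1 f j hj (by omega) x, Pfun_eval_1 h1 f j hj (by omega) x,
      Pfun_eval_2 h1 f j hj (by omega) x]
    exact relu_max _ _
  · rw [dif_neg hj]
    unfold gfun
    rw [dif_neg hj]
    simp only
    have hje : 3 * (j : ℕ) = 3 * (m / 2) := by have := j.isLt; omega
    simp only [hje]
    rw [Pfun_eval_last0 h1 f x, Pfun_eval_last1 h1 f x]
    exact relu_sub_relu _
lemma sup_gfun {n m : ℕ} (h1 : 1 < m) (f : Fin m → (Fin n → ℝ) → ℝ) (x : Fin n → ℝ)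
    (H1 : (Finset.univ : Finset (Fin ((m + 1) / 2))).Nonempty)
    (H : (Finset.univ : Finset (Fin m)).Nonempty) :
    (Finset.univ.sup' H1 fun j => gfun m j (fun t => relu (Pfun h1 f (t : ℕ) x))) =
      Finset.univ.sup' H fun i => f i x := by
  apply le_antisymm
  · apply Finset.sup'_le
    intro j _
    rw [gfun_relu_Pfun h1 f x j]
    split_ifs with hj
    · exact max_le (Finset.le_sup' (fun i => f i x) (Finset.mem_univ _))
        (Finset.le_sup' (fun i => f i x) (Finset.mem_univ _))
    · exact Finset.le_sup' (fun i => f i x) (Finset.mem_univ _)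
  · apply Finset.sup'_le
    intro i _
    have hi2 : (i : ℕ) / 2 < (m + 1) / 2 := by have := i.isLt; omega
    refine le_trans ?_ (Finset.le_sup' _ (Finset.mem_univ (⟨(i : ℕ) / 2, hi2⟩ : Fin ((m + 1) / 2))))
    rw [gfun_relu_Pfun h1 f x]
    split_ifs with hj
    · have key : ∀ a b : Fin m, (a : ℕ) = 2 * ((i : ℕ) / 2) → (b : ℕ) = 2 * ((i : ℕ) / 2) + 1 →
          f i x ≤ max (f a x) (f b x) := by
        intro a b ha hb
        rcases Nat.even_or_odd (i : ℕ) with he | ho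
        · have hai : a = i := Fin.ext (by rw [ha]; have := Nat.even_iff.mp he; omega)
          rw [hai]
          exact le_max_left _ _
        · have hbi : b = i := Fin.ext (by rw [hb]; have := Nat.odd_iff.mp ho; omega)
          rw [hbi]
          exact le_max_right _ _
      exact key _ _ rfl rfl
    · have hj' : ¬ (i : ℕ) / 2 < m / 2 := hj
      have key : ∀ a : Fin m, (a : ℕ) = m - 1 → f i x ≤ f a x := by
        intro a ha
        have hai : a = i := Fin.ext (by rw [ha]; have := i.isLt; omega)
        rw [hai]
      exact key _ rfl
/-- Prepend an affine+ReLU layer to a network. -/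
def prependNet {n w : ℕ} (N' : ReLUNet) (h0 : N'.k 0 = w) (A : Fin w → Fin n → ℝ)
    (C : Fin w → ℝ) : ReLUNet :=
  ⟨N'.hidden + 1,
    fun i => match i with | 0 => n | i + 1 => N'.k i,
    fun i => match i with
      | 0 => fun t s => A (Fin.cast h0 t) s
      | i + 1 => N'.W i,
    fun i => match i with
      | 0 => fun t => C (Fin.cast h0 t)
      | i + 1 => N'.b i⟩

lemma prependNet_layer0 {n w : ℕ} (N' : ReLUNet) (h0 : N'.k 0 = w) (A : Fin w → Fin n → ℝ)
    (C : Fin w → ℝ) (x : Fin n → ℝ) (t : Fin (N'.k 0)) :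
    (prependNet N' h0 A C).layerOut 0 x t =
      (∑ s, A (Fin.cast h0 t) s * x s) + C (Fin.cast h0 t) := by
  simp [prependNet, ReLUNet.layerOut, Matrix.mulVec, dotProduct]
  rfl

lemma prependNet_layerOut {n w : ℕ} (N' : ReLUNet) (h0 : N'.k 0 = w) (A : Fin w → Fin n → ℝ)
    (C : Fin w → ℝ) (i : ℕ) (x : Fin n → ℝ) :
    (prependNet N' h0 A C).layerOut (i + 1) x =
      N'.layerOut i (fun t => relu ((prependNet N' h0 A C).layerOut 0 x t)) := by
  induction i with
  | zero => rfl
  | succ i ih =>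
      have step : (prependNet N' h0 A C).layerOut (i + 1 + 1) x =
          ((prependNet N' h0 A C).W (i + 2)).mulVec
            (fun j => relu ((prependNet N' h0 A C).layerOut (i + 1) x j)) +
          (prependNet N' h0 A C).b (i + 2) := rfl
      rw [step, ih]
      rfl

lemma prepend {n w : ℕ} (N' : ReLUNet) (g : (Fin w → ℝ) → ℝ) (hN' : N'.ComputesScalar g)
    (A : Fin w → Fin n → ℝ) (C : Fin w → ℝ) :
    ∃ N : ReLUNet, N.depth = N'.depth + 1 ∧
      N.numHiddenNeurons = w + N'.numHiddenNeurons ∧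
      N.maxWidth = max w N'.maxWidth ∧
      N.ComputesScalar (fun x => g (fun t => relu ((∑ s, A t s * x s) + C t))) := by
  obtain ⟨h0, h1, hc⟩ := hN'
  refine ⟨prependNet N' h0 A C, ?_, ?_, ?_, ?_⟩
  case _ => rfl
  case _ =>
    show (∑ i ∈ Finset.Icc 1 (N'.hidden + 1), _) = _
    rw [show Finset.Icc 1 (N'.hidden + 1) = (Finset.Icc 0 N'.hidden).map (addRightEmbedding 1) from by rw [Finset.map_add_right_Icc], Finset.sum_map]
    rw [show Finset.Icc 0 N'.hidden = insert 0 (Finset.Icc 1 N'.hidden) from by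
      ext a; simp; omega, Finset.sum_insert (by simp)]
    rw [ReLUNet.numHiddenNeurons]
    congr 1
  case _ =>
    show (Finset.Icc 1 (N'.hidden + 1)).sup _ = _
    rw [show Finset.Icc 1 (N'.hidden + 1) = (Finset.Icc 0 N'.hidden).map (addRightEmbedding 1) from by rw [Finset.map_add_right_Icc], Finset.sup_map]
    rw [show Finset.Icc 0 N'.hidden = insert 0 (Finset.Icc 1 N'.hidden) from by
      ext a; simp; omega, Finset.sup_insert]
    rw [ReLUNet.maxWidth]
    congr 1
  case _ =>
    refine ⟨rfl, h1, fun x j => ?_⟩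
    have h := hc (fun t => relu ((∑ s, A t s * x s) + C t)) j
    simp only [ReLUNet.eval] at h ⊢
    show (prependNet N' h0 A C).layerOut (N'.hidden + 1) _ j = _
    refine (congrFun (prependNet_layerOut N' h0 A C N'.hidden _) j).trans ?_
    refine Eq.trans ?_ h
    congr 1
lemma rseq_step (m : ℕ) (h1 : 1 < m) : rseq m = (3 * m + 1) / 2 + rseq ((m + 1) / 2) := by
  obtain ⟨k, rfl⟩ : ∃ k, m = k + 2 := ⟨m - 2, by omega⟩
  rw [rseq]
  split_ifs with h
  · rw [show (k + 2 + 1) / 2 = (k + 2) / 2 from by omega]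
    omega
  · rw [show (k + 2 + 1) / 2 = (k + 3) / 2 from by omega]
    omega
lemma aux_max : ∀ m, 0 < m → ∀ (n : ℕ) (f : Fin m → (Fin n → ℝ) → ℝ),
    (∀ i, IsAffineFn (f i)) → ∀ (H : (Finset.univ : Finset (Fin m)).Nonempty),
    ∃ N : ReLUNet, N.depth = Nat.clog 2 m + 1 ∧ N.numHiddenNeurons = rseq m ∧
      N.maxWidth = (if 1 < m then 1 else 0) * ((3 * m + 1) / 2) ∧
      N.ComputesScalar fun x => Finset.univ.sup' H fun i => f i x := by
  intro m
  induction m using Nat.strong_induction_on with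
  | _ m IH =>
    intro hm n f hf H
    rcases eq_or_lt_of_le (show 1 ≤ m from hm) with h1 | h1
    · -- base case m = 1
      subst h1
      obtain ⟨a, c, ha⟩ := hf 0
      refine ⟨⟨0, fun i => match i with | 0 => n | _ + 1 => 1,
        fun i => match i with | 0 => fun _ s => a s | _ + 1 => 0,
        fun i => match i with | 0 => fun _ => c | _ + 1 => 0⟩, ?_, ?_, ?_, ?_⟩
      · show (0 : ℕ) + 1 = Nat.clog 2 1 + 1
        rw [Nat.clog_one_right]
      · show (∑ i ∈ Finset.Icc 1 0, _) = rseq 1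
        rw [Finset.Icc_eq_empty (by omega), Finset.sum_empty]
        simp [rseq]
      · show (Finset.Icc 1 0).sup _ = _
        rw [Finset.Icc_eq_empty (by omega)]
        simp
      · refine ⟨rfl, rfl, fun x j => ?_⟩
        have hsup : (Finset.univ.sup' H fun i => f i x) = f 0 x :=
          le_antisymm (Finset.sup'_le _ _ fun i _ => by rw [Fin.eq_zero i])
            (Finset.le_sup' (fun i => f i x) (Finset.mem_univ 0))
        refine Eq.trans ?_ hsup.symm
        rw [ha]
        simp [ReLUNet.eval, ReLUNet.layerOut, Matrix.mulVec, dotProduct]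
    · -- inductive step m ≥ 2
      have hm' : 0 < (m + 1) / 2 := by omega
      have hlt : (m + 1) / 2 < m := by omega
      have H1 : (Finset.univ : Finset (Fin ((m + 1) / 2))).Nonempty :=
        Finset.univ_nonempty_iff.mpr ⟨⟨0, hm'⟩⟩
      obtain ⟨N', hd', hn', hw', hc'⟩ := IH ((m + 1) / 2) hlt hm' ((3 * m + 1) / 2)
        (fun j => gfun m j) (fun j => gfun_affine m j) H1
      obtain ⟨A, C, hAC⟩ : ∃ (A : Fin ((3 * m + 1) / 2) → Fin n → ℝ)
          (C : Fin ((3 * m + 1) / 2) → ℝ),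
          ∀ t x, (∑ s, A t s * x s) + C t = Pfun h1 f (t : ℕ) x := by
        choose A C hac using fun t : Fin ((3 * m + 1) / 2) => Pfun_affine h1 f hf (t : ℕ)
        exact ⟨A, C, fun t x => (hac t x).symm⟩
      obtain ⟨N, hd, hn, hw, hc⟩ := prepend N' _ hc' A C
      refine ⟨N, ?_, ?_, ?_, ?_⟩
      · rw [hd, hd', Nat.clog_of_two_le one_lt_two h1]
        congr 2
      · rw [hn, hn', rseq_step m h1]
      · rw [hw, hw']
        split_ifs <;> omega
      · have hEq : (fun x => (fun y => Finset.univ.sup' H1 fun j => gfun m j y)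
            (fun t : Fin ((3 * m + 1) / 2) => relu ((∑ s, A t s * x s) + C t))) =
            fun x => Finset.univ.sup' H fun i => f i x := by
          funext x
          simp only
          have : (fun t : Fin ((3 * m + 1) / 2) => relu ((∑ s, A t s * x s) + C t)) =
              fun t : Fin ((3 * m + 1) / 2) => relu (Pfun h1 f (t : ℕ) x) :=
            funext fun t => by rw [hAC]
          rw [this, sup_gfun h1 f x H1 H]
        exact hEq ▸ hc
/-- **Lemma (extremum of affine functions).** For any `m ≥ 1` scalar-valued affine functions
`f₁, …, f_m : ℝⁿ → ℝ`, there exists a `(⌈log₂ m⌉ + 1)`-layer ReLU network with `r(m)` hidden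
neurons and a maximum width of `𝟙[m > 1]·⌈3m/2⌉` computing `x ↦ max_{i∈[m]} f_i(x)`, and
likewise one computing `x ↦ min_{i∈[m]} f_i(x)`. -/
theorem relu_net_computes_extremum (n m : ℕ) (hm : 0 < m) (f : Fin m → (Fin n → ℝ) → ℝ)
    (hf : ∀ i, IsAffineFn (f i)) :
    (∃ N : ReLUNet,
        N.depth = Nat.clog 2 m + 1 ∧
        N.numHiddenNeurons = rseq m ∧
        N.maxWidth = (if 1 < m then 1 else 0) * ((3 * m + 1) / 2) ∧
        N.ComputesScalar fun x =>
          Finset.univ.sup' (Finset.univ_nonempty_iff.mpr ⟨⟨0, hm⟩⟩) fun i => f i x) ∧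
    (∃ N : ReLUNet,
        N.depth = Nat.clog 2 m + 1 ∧
        N.numHiddenNeurons = rseq m ∧
        N.maxWidth = (if 1 < m then 1 else 0) * ((3 * m + 1) / 2) ∧
        N.ComputesScalar fun x =>
          Finset.univ.inf' (Finset.univ_nonempty_iff.mpr ⟨⟨0, hm⟩⟩) fun i => f i x) := by
  constructor
  · exact aux_max m hm n f hf _
  · have H : (Finset.univ : Finset (Fin m)).Nonempty := Finset.univ_nonempty_iff.mpr ⟨⟨0, hm⟩⟩
    obtain ⟨N, hd, hn, hw, hc⟩ := aux_max m hm n (fun i x => -f i x)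
      (fun i => (hf i).neg') H
    obtain ⟨N2, hh2, hk2, hc2⟩ := neg_net N _ hc
    refine ⟨N2, ?_, ?_, ?_, ?_⟩
    · rw [ReLUNet.depth, hh2, ← ReLUNet.depth, hd]
    · rw [ReLUNet.numHiddenNeurons, hh2, hk2, ← ReLUNet.numHiddenNeurons, hn]
    · rw [ReLUNet.maxWidth, hh2, hk2, ← ReLUNet.maxWidth, hw]
    · have hEq : (fun x => -((fun x => Finset.univ.sup' H fun i => (fun i x => -f i x) i x) x)) =
          fun x => Finset.univ.inf' (Finset.univ_nonempty_iff.mpr ⟨⟨0, hm⟩⟩) fun i => f i x :=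
        funext fun x => neg_sup'_neg Finset.univ H (fun i => f i x)
      exact hEq ▸ hc2
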